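/- In any group with elements s_{p,q} (1 ≤ p < q ≤ 4) satisfying the cactus group relations, with σ_{p,r,q} := s_{p,q} s_{r+1,q} s_{p,r} (and s_{a,a} = 1), the identity σ_{1,2,3} ∘ σ_{1,2,4} ∘ σ_{1,1,3} ∘ σ_{1,1,2} = σ_{1,1,4} ∘ σ_{1,2,3} holds. -/
import Mathlib


/-- In any group with elements s_{p,q} (1 ≤ p < q ≤ 4) satisfying the cactus
group relations, with σ_{p,r,q} := s_{p,q} s_{r+1,q} s_{p,r} (and s_{a,a} = 1), the identity
σ_{1,2,3} ∘ σ_{1,2,4} ∘ σ_{1,1,3} ∘ σ_{1,1,2} = σ_{1,1,4} ∘ σ_{1,2,3} holds. -/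
theorem cactus_sigma_identity_four {G : Type*} [Group G] (s : ℕ → ℕ → G)
    (hrefl : ∀ a, s a a = 1)
    (hR1 : ∀ p q, 1 ≤ p → p < q → q ≤ 4 → s p q * s p q = 1)
    (hR2 : ∀ p q k l, 1 ≤ p → p < q → q ≤ 4 → 1 ≤ k → k < l → l ≤ 4 →
      (q < k ∨ l < p) → s p q * s k l = s k l * s p q)
    (hR3 : ∀ p q k l, 1 ≤ p → p < q → q ≤ 4 → p ≤ k → k < l → l ≤ q →
      s p q * s k l = s (p + q - l) (p + q - k) * s p q) :
    (s 1 3 * s 3 3 * s 1 2) * (s 1 4 * s 3 4 * s 1 2) *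
      (s 1 3 * s 2 3 * s 1 1) * (s 1 2 * s 2 2 * s 1 1) =
      (s 1 4 * s 2 4 * s 1 1) * (s 1 3 * s 3 3 * s 1 2) := by
  have i12 := hR1 1 2 (by norm_num) (by norm_num) (by norm_num)
  have i34 := hR1 3 4 (by norm_num) (by norm_num) (by norm_num)
  have e1 : s 1 4 * s 3 4 = s 1 2 * s 1 4 := by
    simpa using hR3 1 4 3 4 (by norm_num) (by norm_num) (by norm_num) (by norm_num) (by norm_num) (by norm_num)
  have e2 : s 1 4 * s 1 2 = s 3 4 * s 1 4 := by
    simpa using hR3 1 4 1 2 (by norm_num) (by norm_num) (by norm_num) (by norm_num) (by norm_num) (by norm_num)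
  have e3 : s 1 4 * s 1 3 = s 2 4 * s 1 4 := by
    simpa using hR3 1 4 1 3 (by norm_num) (by norm_num) (by norm_num) (by norm_num) (by norm_num) (by norm_num)
  have e4 : s 1 4 * s 2 3 = s 2 3 * s 1 4 := by
    simpa using hR3 1 4 2 3 (by norm_num) (by norm_num) (by norm_num) (by norm_num) (by norm_num) (by norm_num)
  have e5 : s 1 4 * s 2 4 = s 1 3 * s 1 4 := by
    simpa using hR3 1 4 2 4 (by norm_num) (by norm_num) (by norm_num) (by norm_num) (by norm_num) (by norm_num)
  have e6 : s 2 4 * s 2 3 = s 3 4 * s 2 4 := by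
    simpa using hR3 2 4 2 3 (by norm_num) (by norm_num) (by norm_num) (by norm_num) (by norm_num) (by norm_num)
  have i12' : ∀ x : G, s 1 2 * (s 1 2 * x) = x := fun x => by
    rw [← mul_assoc, i12, one_mul]
  have i34' : ∀ x : G, s 3 4 * (s 3 4 * x) = x := fun x => by
    rw [← mul_assoc, i34, one_mul]
  have e1' : ∀ x : G, s 1 4 * (s 3 4 * x) = s 1 2 * (s 1 4 * x) := fun x => by
    rw [← mul_assoc, e1, mul_assoc]
  have e2' : ∀ x : G, s 1 4 * (s 1 2 * x) = s 3 4 * (s 1 4 * x) := fun x => by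
    rw [← mul_assoc, e2, mul_assoc]
  have e3' : ∀ x : G, s 1 4 * (s 1 3 * x) = s 2 4 * (s 1 4 * x) := fun x => by
    rw [← mul_assoc, e3, mul_assoc]
  have e4' : ∀ x : G, s 1 4 * (s 2 3 * x) = s 2 3 * (s 1 4 * x) := fun x => by
    rw [← mul_assoc, e4, mul_assoc]
  have e5' : ∀ x : G, s 1 4 * (s 2 4 * x) = s 1 3 * (s 1 4 * x) := fun x => by
    rw [← mul_assoc, e5, mul_assoc]
  have e6' : ∀ x : G, s 2 4 * (s 2 3 * x) = s 3 4 * (s 2 4 * x) := fun x => by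
    rw [← mul_assoc, e6, mul_assoc]
  simp only [hrefl, mul_one, one_mul, mul_assoc, e1, e1', e2, e2', e3, e3', e4, e4',
    e5, e5', e6, e6', i12, i12', i34, i34']
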